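/- For each non-negative integer n, the polynomial identity (x+y+n)^n = Σ_{i+j=n} C(n,i) · h_i(x) · (y+j)^j holds, where h_k(x) = x(x+k)^{k-1} for k ≥ 1 and h_0(x) = 1. -/

import Mathlib

/-- The Abel polynomials: `h 0 x = 1` and `h k x = x * (x + k)^(k-1)` for `k ≥ 1`. -/
def habel {A : Type*} [CommRing A] : ℕ → A → A
  | 0, _ => 1
  | (m + 1), x => x * (x + ((m + 1 : ℕ) : A)) ^ m

open Polynomial

lemma habel_zero_def {A : Type*} [CommRing A] (x : A) : habel 0 x = 1 := rfl

lemma map_habel {A B : Type*} [CommRing A] [CommRing B] (f : A →+* B) (k : ℕ) (x : A) :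
    f (habel k x) = habel k (f x) := by
  cases k with
  | zero => simp [habel]
  | succ m => simp [habel]

lemma habel_zero {A : Type*} [CommRing A] (m : ℕ) : habel (m + 1) (0 : A) = 0 := by
  simp [habel]

lemma derivative_habel {R : Type*} [CommRing R] (k : ℕ) :
    derivative (habel (k + 1) (X : R[X])) = ((k : R[X]) + 1) * habel k (X + 1) := by
  cases k with
  | zero => simp [habel]
  | succ m =>
    simp only [habel]
    rw [derivative_mul, derivative_pow, derivative_X, derivative_add, derivative_X,
      derivative_natCast, Nat.add_sub_cancel]
    simp only [C_eq_natCast]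
    push_cast
    ring

def keyProp (n : ℕ) : Prop :=
  ((X : Polynomial (Polynomial ℤ)) + C X + ((n : ℕ) : Polynomial (Polynomial ℤ))) ^ n =
    ∑ i ∈ Finset.range (n + 1),
      ((n.choose i : ℕ) : Polynomial (Polynomial ℤ)) * habel i X *
        (C X + ((n - i : ℕ) : Polynomial (Polynomial ℤ))) ^ (n - i)

lemma transfer {n : ℕ} (h : keyProp n) {A : Type*} [CommRing A] (x y : A) :
    (x + y + (n : A)) ^ n =
      ∑ i ∈ Finset.range (n + 1),
        (n.choose i : A) * habel i x * (y + ((n - i : ℕ) : A)) ^ (n - i) := by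
  have hmap := congrArg (eval₂RingHom (eval₂RingHom (Int.castRingHom A) y) x) h
  rw [map_pow, map_add, map_add, map_sum] at hmap
  simp only [map_mul, map_pow, map_add, map_natCast, map_habel, coe_eval₂RingHom, eval₂_X,
    eval₂_C] at hmap
  exact hmap

lemma abel_key : ∀ n : ℕ, keyProp n := by
  intro n
  induction n with
  | zero => simp [keyProp, habel]
  | succ n ih =>
    unfold keyProp
    set L : Polynomial (Polynomial ℤ) := ((X : Polynomial (Polynomial ℤ)) + C X + ((n + 1 : ℕ) : Polynomial (Polynomial ℤ))) ^ (n + 1) with hL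
    set S : Polynomial (Polynomial ℤ) := ∑ i ∈ Finset.range (n + 1 + 1),
        ((n + 1).choose i : Polynomial (Polynomial ℤ)) * habel i X *
          (C X + ((n + 1 - i : ℕ) : Polynomial (Polynomial ℤ))) ^ (n + 1 - i) with hS
    have hder : derivative L = derivative S := by
      have hdL : derivative L = ((n + 1 : ℕ) : Polynomial (Polynomial ℤ)) *
          ((X + C X + ((n + 1 : ℕ) : Polynomial (Polynomial ℤ))) ^ n) := by
        rw [hL, derivative_pow]
        simp [C_eq_natCast]
      have hterm : ∀ i, derivative (((n + 1).choose i : Polynomial (Polynomial ℤ)) * habel i X *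
            (C X + ((n + 1 - i : ℕ) : Polynomial (Polynomial ℤ))) ^ (n + 1 - i)) =
          ((n + 1).choose i : Polynomial (Polynomial ℤ)) * derivative (habel i X) *
            (C X + ((n + 1 - i : ℕ) : Polynomial (Polynomial ℤ))) ^ (n + 1 - i) := by
        intro i
        rw [derivative_mul, derivative_mul, derivative_natCast, derivative_pow]
        simp
      have hdS : derivative S = ((n + 1 : ℕ) : Polynomial (Polynomial ℤ)) *
          ∑ j ∈ Finset.range (n + 1),
            ((n).choose j : Polynomial (Polynomial ℤ)) * habel j (X + 1) *
              (C X + ((n - j : ℕ) : Polynomial (Polynomial ℤ))) ^ (n - j) := by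
        rw [hS, derivative_sum]
        rw [Finset.sum_congr rfl (fun i _ => hterm i)]
        rw [Finset.sum_range_succ']
        simp only [habel_zero_def, derivative_one, mul_zero, zero_mul, add_zero]
        rw [Finset.mul_sum]
        refine Finset.sum_congr rfl (fun j hj => ?_)
        rw [derivative_habel, Nat.succ_sub_succ]
        have hc : (((n + 1).choose (j + 1) : ℕ) : Polynomial (Polynomial ℤ)) * ((j : Polynomial (Polynomial ℤ)) + 1) =
            ((n + 1 : ℕ) : Polynomial (Polynomial ℤ)) * ((n.choose j : ℕ) : Polynomial (Polynomial ℤ)) := by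
          have h1 := Nat.add_one_mul_choose_eq n j
          have h2 := congrArg (Nat.cast : ℕ → Polynomial (Polynomial ℤ)) h1
          push_cast at h2 ⊢
          linear_combination -h2
        linear_combination hc * (habel j (X + 1) * (C X + ((n - j : ℕ) : Polynomial (Polynomial ℤ))) ^ (n - j))
      have hih := transfer ih (X + 1 : Polynomial (Polynomial ℤ)) (C X : Polynomial (Polynomial ℤ))
      rw [hdL, hdS, ← hih]
      push_cast
      ring
    have h0 : eval 0 L = eval 0 S := by
      have hSL : eval 0 S = (X + ((n + 1 : ℕ) : Polynomial ℤ)) ^ (n + 1) := by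
        rw [hS, eval_finset_sum]
        rw [Finset.sum_eq_single 0]
        · simp [habel]
        · intro i _ hi
          obtain ⟨m, rfl⟩ := Nat.exists_eq_succ_of_ne_zero hi
          have hm : eval 0 (habel (m + 1) (X : Polynomial (Polynomial ℤ))) = habel (m + 1) (0 : Polynomial ℤ) := by
            have := map_habel (evalRingHom (0 : Polynomial ℤ)) (m + 1) (X : Polynomial (Polynomial ℤ))
            simpa using this
          simp [hm, habel_zero]
        · simp
      rw [hSL, hL]
      simp
    have hC := eq_C_of_derivative_eq_zero (p := L - S) (by rw [derivative_sub, hder, sub_self])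
    rw [coeff_zero_eq_eval_zero, eval_sub, ← h0, sub_self, map_zero] at hC
    exact sub_eq_zero.mp hC


/-- Abel's first identity: `(x+y+n)^n = ∑_{i+j=n} C(n,i) h_i(x) (y+j)^j`. -/
theorem abel_first_identity {A : Type*} [CommRing A] (n : ℕ) (x y : A) :
    (x + y + (n : A)) ^ n =
      ∑ i ∈ Finset.range (n + 1),
        (n.choose i : A) * habel i x * (y + ((n - i : ℕ) : A)) ^ (n - i) :=
  transfer (abel_key n) x y
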